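/- Let u_{π,α} be the scaled carrier game taking value α on sequences having π as a prefix and 0 otherwise. If a solution concept φ satisfies Sequential Efficiency and the Sequential Null Player property on the game (N, u_{π,α}), then φ_i(π', u_{π,α}) = α if i = ℓ(π) (the last player of π) and π ⊑ π', and φ_i(π', u_{π,α}) = 0 otherwise. -/
import Mathlib


noncomputable section

/-- Sequences of players (lists over `Fin n`); injective sequences are `Nodup` lists. -/
abbrev TSeq (n : ℕ) := List (Fin n)

/-- `prefBefore π i` is the longest prefix of `π` not containing `i`. -/
def prefBefore {n : ℕ} (π : TSeq n) (i : Fin n) : TSeq n := π.takeWhile (· ≠ i)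

/-- The marginal-contribution solution concept. -/
def margSol {n : ℕ} (v : TSeq n → ℝ) (π : TSeq n) (i : Fin n) : ℝ :=
  if i ∈ π then v (prefBefore π i ++ [i]) - v (prefBefore π i) else 0

/-- The extended Shapley value: average marginal contribution over all full sequences,
    identified with permutations of `Fin n` via `List.ofFn`. -/
def extShap {n : ℕ} (v : TSeq n → ℝ) (i : Fin n) : ℝ :=
  (1 / n.factorial : ℝ) * ∑ σ : Equiv.Perm (Fin n), margSol v (List.ofFn ⇑σ) i

lemma prefix_snoc_aux {n : ℕ} (π σ : TSeq n) (i : Fin n)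
    (h : π <+: σ ++ [i]) : π = σ ++ [i] ∨ π <+: σ := by
  rcases Nat.lt_or_ge σ.length π.length with hl | hl
  · left
    have hle : π.length ≤ (σ ++ [i]).length := h.length_le
    have hlen : π.length = (σ ++ [i]).length := by
      simp only [List.length_append, List.length_singleton] at hle ⊢
      omega
    exact h.eq_of_length hlen
  · right
    have := h.take π.length
    rw [List.take_append_of_le_length hl] at this
    simpa [List.prefix_take_iff] using this

/-- on the scaled carrier game, SE + SNP force the whole worth α to the last
    player of π on sequences extending π, and 0 everywhere else. -/
theorem stmt8 {n : ℕ} (π : TSeq n) (hnd : π.Nodup) (hne : π ≠ []) (α : ℝ)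
    (φ : TSeq n → Fin n → ℝ)
    (hzero : ∀ (π' : TSeq n) (i : Fin n), i ∉ π' → φ π' i = 0)
    (SE : ∀ π' : TSeq n, π'.Nodup → π' ≠ [] →
      ∑ i ∈ π'.toFinset, φ π' i = (if π <+: π' then α else 0))
    (SNP : ∀ i : Fin n,
      (∀ σ : TSeq n, σ.Nodup → i ∉ σ →
        (if π <+: σ ++ [i] then α else (0:ℝ)) = (if π <+: σ then α else 0)) →
      ∀ π' : TSeq n, φ π' i = 0) :
    ∀ π' : TSeq n, π'.Nodup → π' ≠ [] → ∀ i : Fin n,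
      φ π' i = if i = π.getLast hne ∧ π <+: π' then α else 0 := by
  -- every non-last player is null
  have hnull : ∀ i : Fin n, i ≠ π.getLast hne → ∀ π' : TSeq n, φ π' i = 0 := by
    intro i hi π'
    apply SNP i
    intro σ hσ hiσ
    have hiff : (π <+: σ ++ [i]) ↔ (π <+: σ) := by
      constructor
      · intro h
        rcases prefix_snoc_aux π σ i h with h | h
        · exfalso
          apply hi
          subst h
          simp [List.getLast_append]
        · exact h
      · intro h
        exact h.trans (List.prefix_append σ [i])
    simp [hiff]
  intro π' hnd' hne' i
  by_cases hi : i = π.getLast hne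
  · subst hi
    by_cases hmem : π.getLast hne ∈ π'
    · have hsum := SE π' hnd' hne'
      have hsingle : ∑ j ∈ π'.toFinset, φ π' j = φ π' (π.getLast hne) := by
        apply Finset.sum_eq_single_of_mem
        · simpa using hmem
        · intro j _ hj
          exact hnull j hj π'
      rw [hsingle] at hsum
      rw [hsum]
      by_cases hp : π <+: π' <;> simp [hp]
    · rw [hzero π' _ hmem]
      have : ¬ (π <+: π') := by
        intro hp
        exact hmem (hp.subset (List.getLast_mem hne))
      simp [this]
  · rw [hnull i hi π']
    simp [hi]
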